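/- Every simple, connected graph G=(V,E) admits a partition V = A ∪ B ∪ C such that: every vertex a ∈ A satisfies d_B(a) ≥ d_A(a) + max{1, d_C(a)}, every vertex b ∈ B satisfies d_A(b) ≥ d_B(b) + max{1, d_C(b)}, no two vertices of C are adjacent, and every vertex c ∈ C satisfies d_A(c) = d_B(c). -/

import Mathlib

open Finset

variable {V : Type*} [Fintype V] [DecidableEq V]

/-- Number of neighbors of `v` lying in `S`. -/
def degIn (G : SimpleGraph V) [DecidableRel G.Adj] (v : V) (S : Finset V) : ℕ :=
  (S.filter (G.Adj v)).card

/-- Number of edges with one endpoint in `X` and the other in `Y`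
(each edge counted once; for `X = Y` this is the number of edges inside `X`). -/
def eBtw (G : SimpleGraph V) [DecidableRel G.Adj] (X Y : Finset V) : ℕ :=
  (G.edgeFinset.filter (fun e => ∃ x ∈ X, ∃ y ∈ Y, e = s(x, y))).card

namespace DecompAux

/-- edge weight table: labels 0 = A, 1 = B, 2 = C. -/
def wgt : Fin 3 → Fin 3 → ℤ := fun a b =>
  if a = 2 then (if b = 2 then -1 else 0)
  else if b = 2 then 0
  else if a = b then -1 else 1

lemma wgt_symm : ∀ a b, wgt a b = wgt b a := by decide

def phi (G : SimpleGraph V) [DecidableRel G.Adj] (ℓ : V → Fin 3) : ℤ :=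
  ∑ u, ∑ x, if G.Adj u x then wgt (ℓ u) (ℓ x) else 0

def nbr (G : SimpleGraph V) [DecidableRel G.Adj] (ℓ : V → Fin 3) (v : V) (t : Fin 3) : ℤ :=
  ((univ.filter (fun x => G.Adj v x ∧ ℓ x = t)).card : ℤ)

lemma nbr_nonneg (G : SimpleGraph V) [DecidableRel G.Adj] (ℓ : V → Fin 3) (v : V) (t : Fin 3) :
    0 ≤ nbr G ℓ v t := Int.natCast_nonneg _

lemma nbr_le_card (G : SimpleGraph V) [DecidableRel G.Adj] (ℓ : V → Fin 3) (v : V) (t : Fin 3) :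
    nbr G ℓ v t ≤ (Fintype.card V : ℤ) := by
  unfold nbr
  exact_mod_cast Finset.card_filter_le _ _

def csize (ℓ : V → Fin 3) : ℤ := ∑ v, (if ℓ v = 2 then (1 : ℤ) else 0)

def psi (G : SimpleGraph V) [DecidableRel G.Adj] (ℓ : V → Fin 3) : ℤ :=
  ((Fintype.card V : ℤ) + 1) * phi G ℓ + csize ℓ

/-- The fundamental single-vertex move formula. -/
lemma phi_update (G : SimpleGraph V) [DecidableRel G.Adj] (ℓ : V → Fin 3) (v : V) (t : Fin 3) :
    phi G (Function.update ℓ v t) =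
      phi G ℓ + 2 * ∑ t' : Fin 3, (wgt t t' - wgt (ℓ v) t') * nbr G ℓ v t' := by
  classical
  set D : V → V → ℤ := fun u x =>
    if G.Adj u x then wgt (Function.update ℓ v t u) (Function.update ℓ v t x)
      - wgt (ℓ u) (ℓ x) else 0 with hD
  have hdiff : phi G (Function.update ℓ v t) - phi G ℓ = ∑ u, ∑ x, D u x := by
    unfold phi
    rw [← Finset.sum_sub_distrib]
    refine Finset.sum_congr rfl fun u _ => ?_
    rw [← Finset.sum_sub_distrib]
    refine Finset.sum_congr rfl fun x _ => ?_
    by_cases h : G.Adj u x <;> simp [hD, h]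
  have hD0 : ∀ u x, u ≠ v → x ≠ v → D u x = 0 := by
    intro u x hu hx
    simp only [hD, Function.update_of_ne hu, Function.update_of_ne hx, sub_self, ite_self]
  have hDsymm : ∀ u x, D u x = D x u := by
    intro u x
    by_cases h : G.Adj u x
    · simp only [hD, if_pos h, if_pos (G.adj_symm h),
        wgt_symm (Function.update ℓ v t u), wgt_symm (ℓ u)]
    · have h' : ¬ G.Adj x u := fun hh => h (G.adj_symm hh)
      simp [hD, h, h']
  have hvv : ¬ G.Adj v v := G.loopless.irrefl v
  have hDvv : D v v = 0 := by simp [hD, hvv]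
  have hsum : ∑ u, ∑ x, D u x = 2 * ∑ x, D v x := by
    rw [← Finset.add_sum_erase _ (fun u => ∑ x, D u x) (mem_univ v)]
    have h1 : ∀ u ∈ univ.erase v, (∑ x, D u x) = D v u := by
      intro u hu
      have hu' : u ≠ v := (Finset.mem_erase.1 hu).1
      rw [Finset.sum_eq_single v (fun x _ hx => hD0 u x hu' hx)
        (fun h => absurd (mem_univ v) h)]
      exact hDsymm u v
    have h2 : ∑ u ∈ univ.erase v, (∑ x, D u x) = ∑ u ∈ univ.erase v, D v u :=
      Finset.sum_congr rfl h1
    have h3 : ∑ u ∈ univ.erase v, D v u = (∑ u, D v u) - D v v :=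
      Finset.sum_erase_eq_sub (mem_univ v)
    rw [h2, h3, hDvv]
    ring
  have hDv : ∀ x, D v x = if G.Adj v x then (wgt t (ℓ x) - wgt (ℓ v) (ℓ x)) else 0 := by
    intro x
    by_cases h : G.Adj v x
    · have hx : x ≠ v := fun hh => hvv (hh ▸ h)
      simp [hD, h, Function.update_of_ne hx, Function.update_self]
    · simp [hD, h]
  have hfiber : ∑ x, D v x = ∑ t' : Fin 3, (wgt t t' - wgt (ℓ v) t') * nbr G ℓ v t' := by
    rw [Finset.sum_congr rfl (fun x _ => hDv x), ← Finset.sum_filter]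
    rw [← Finset.sum_fiberwise_of_maps_to (fun x _ => mem_univ (ℓ x))
      (fun x => wgt t (ℓ x) - wgt (ℓ v) (ℓ x))]
    refine Finset.sum_congr rfl fun t' _ => ?_
    have hc : ∀ x ∈ (univ.filter (G.Adj v)).filter (fun x => ℓ x = t'),
        wgt t (ℓ x) - wgt (ℓ v) (ℓ x) = wgt t t' - wgt (ℓ v) t' := by
      intro x hx
      rw [(Finset.mem_filter.1 hx).2]
    rw [Finset.sum_congr rfl hc, Finset.sum_const, Finset.filter_filter]
    unfold nbr
    rw [nsmul_eq_mul, mul_comm]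
  have := hdiff
  rw [hsum, hfiber] at this
  linarith

lemma csize_update (ℓ : V → Fin 3) (w : V) (t : Fin 3) :
    csize (Function.update ℓ w t) =
      csize ℓ + (if t = 2 then (1:ℤ) else 0) - (if ℓ w = 2 then (1:ℤ) else 0) := by
  unfold csize
  rw [← Finset.add_sum_erase _ (fun v => if Function.update ℓ w t v = 2 then (1:ℤ) else 0)
      (mem_univ w),
    ← Finset.add_sum_erase _ (fun v => if ℓ v = 2 then (1:ℤ) else 0) (mem_univ w)]
  have h1 : ∀ v ∈ univ.erase w,
      (if Function.update ℓ w t v = 2 then (1:ℤ) else 0) = (if ℓ v = 2 then (1:ℤ) else 0) := by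
    intro v hv
    rw [Function.update_of_ne (Finset.mem_erase.1 hv).1]
  rw [Finset.sum_congr rfl h1, Function.update_self]
  ring

def mvA (S : Finset V) (ℓ : V → Fin 3) : V → Fin 3 := fun x => if x ∈ S then 0 else ℓ x

lemma mvA_empty (ℓ : V → Fin 3) : mvA ∅ ℓ = ℓ := by
  funext x; simp [mvA]

lemma mvA_insert (w : V) (S : Finset V) (ℓ : V → Fin 3) :
    mvA (insert w S) ℓ = Function.update (mvA S ℓ) w 0 := by
  funext x
  by_cases hxw : x = w
  · subst hxw; simp [mvA, Function.update_self]
  · simp [mvA, Function.update_of_ne hxw, Finset.mem_insert, hxw]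

lemma mvA_apply_not_mem {S : Finset V} {ℓ : V → Fin 3} {x : V} (h : x ∉ S) :
    mvA S ℓ x = ℓ x := by simp [mvA, h]

lemma csize_mvA (S : Finset V) (ℓ : V → Fin 3) (hS : ∀ x ∈ S, ℓ x = 2) :
    csize (mvA S ℓ) = csize ℓ - S.card := by
  unfold csize
  have h : ∀ v ∈ (univ : Finset V),
      (if mvA S ℓ v = 2 then (1:ℤ) else 0)
        = (if ℓ v = 2 then (1:ℤ) else 0) - (if v ∈ S then (1:ℤ) else 0) := by
    intro v _
    by_cases hv : v ∈ S
    · simp [mvA, hv, hS v hv]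
    · simp [mvA, hv]
  rw [Finset.sum_congr rfl h, Finset.sum_sub_distrib]
  congr 1
  rw [Finset.sum_ite_mem, Finset.univ_inter, Finset.sum_const]
  simp

lemma no_c_neighbor {G : SimpleGraph V} [DecidableRel G.Adj] {ℓ : V → Fin 3} {w : V}
    (hw : nbr G ℓ w 2 = 0) : ∀ x, G.Adj w x → ℓ x ≠ 2 := by
  intro x hadj hx2
  unfold nbr at hw
  have : (univ.filter (fun x => G.Adj w x ∧ ℓ x = 2)) = ∅ := by
    apply Finset.card_eq_zero.1
    exact_mod_cast hw
  have hmem : x ∈ univ.filter (fun x => G.Adj w x ∧ ℓ x = 2) :=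
    Finset.mem_filter.2 ⟨mem_univ x, hadj, hx2⟩
  rw [this] at hmem
  exact absurd hmem (Finset.notMem_empty x)

lemma nbr_mvA (G : SimpleGraph V) [DecidableRel G.Adj] (ℓ : V → Fin 3) (S : Finset V)
    (hS : ∀ x ∈ S, ℓ x = 2) (w : V) (hw : nbr G ℓ w 2 = 0) (t : Fin 3) :
    nbr G (mvA S ℓ) w t = nbr G ℓ w t := by
  have hfe : (univ.filter (fun x => G.Adj w x ∧ mvA S ℓ x = t))
      = (univ.filter (fun x => G.Adj w x ∧ ℓ x = t)) := by
    apply Finset.filter_congr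
    intro x _
    by_cases hadj : G.Adj w x
    · have hxS : x ∉ S := fun hxS => no_c_neighbor hw x hadj (hS x hxS)
      rw [mvA_apply_not_mem hxS]
    · simp [hadj]
  unfold nbr
  rw [hfe]

lemma phi_mvA (G : SimpleGraph V) [DecidableRel G.Adj] (ℓ : V → Fin 3) (S : Finset V)
    (hS : ∀ w ∈ S, ℓ w = 2 ∧ nbr G ℓ w 0 = nbr G ℓ w 1 ∧ nbr G ℓ w 2 = 0) :
    phi G (mvA S ℓ) = phi G ℓ := by
  classical
  induction S using Finset.induction_on with
  | empty => rw [mvA_empty]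
  | @insert w S hwS ih =>
    have hS' : ∀ x ∈ S, ℓ x = 2 ∧ nbr G ℓ x 0 = nbr G ℓ x 1 ∧ nbr G ℓ x 2 = 0 :=
      fun x hx => hS x (Finset.mem_insert_of_mem hx)
    obtain ⟨hw2, hweq, hwc⟩ := hS w (Finset.mem_insert_self w S)
    rw [mvA_insert, phi_update, ih hS']
    have hlab : mvA S ℓ w = ℓ w := mvA_apply_not_mem hwS
    have hnbr : ∀ t', nbr G (mvA S ℓ) w t' = nbr G ℓ w t' :=
      nbr_mvA G ℓ S (fun x hx => (hS' x hx).1) w hwc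
    rw [hlab, hw2]
    rw [Fin.sum_univ_three]
    simp only [hnbr]
    have e0 : wgt 0 0 - wgt 2 0 = -1 := by decide
    have e1 : wgt 0 1 - wgt 2 1 = 1 := by decide
    have e2 : wgt 0 2 - wgt 2 2 = 1 := by decide
    rw [e0, e1, e2, hwc, hweq]
    ring


lemma ite0 : (if (0:Fin 3) = 2 then (1:ℤ) else 0) = 0 := by decide
lemma ite1 : (if (1:Fin 3) = 2 then (1:ℤ) else 0) = 0 := by decide
lemma ite2 : (if (2:Fin 3) = 2 then (1:ℤ) else 0) = 1 := by decide

lemma oneK : (1:ℤ) ≤ (Fintype.card V : ℤ) + 1 := by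
  have : (0:ℤ) ≤ (Fintype.card V : ℤ) := Int.natCast_nonneg _
  linarith

/-- At a `psi`-maximal labeling, every `C`-vertex is balanced and has no `C`-neighbors. -/
lemma cKey (G : SimpleGraph V) [DecidableRel G.Adj] (ℓ : V → Fin 3)
    (hmax : ∀ m, psi G m ≤ psi G ℓ) (w : V) (hw : ℓ w = 2) :
    nbr G ℓ w 0 = nbr G ℓ w 1 ∧ nbr G ℓ w 2 = 0 := by
  classical
  have hK : (1:ℤ) ≤ (Fintype.card V : ℤ) + 1 := oneK
  have e00 : wgt 0 0 - wgt 2 0 = -1 := by decide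
  have e01 : wgt 0 1 - wgt 2 1 = 1 := by decide
  have e02 : wgt 0 2 - wgt 2 2 = 1 := by decide
  have e10 : wgt 1 0 - wgt 2 0 = 1 := by decide
  have e11 : wgt 1 1 - wgt 2 1 = -1 := by decide
  have e12 : wgt 1 2 - wgt 2 2 = 1 := by decide
  have h0 := hmax (Function.update ℓ w 0)
  have h1 := hmax (Function.update ℓ w 1)
  rw [psi, psi, phi_update, csize_update, hw, Fin.sum_univ_three,
    e00, e01, e02, ite0, ite2] at h0
  rw [psi, psi, phi_update, csize_update, hw, Fin.sum_univ_three,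
    e10, e11, e12, ite1, ite2] at h1
  have hcnn := nbr_nonneg G ℓ w 2
  have hs0 : -(nbr G ℓ w 0) + nbr G ℓ w 1 + nbr G ℓ w 2 ≤ 0 := by
    by_contra hcon
    push_neg at hcon
    have h0' : (1:ℤ) ≤ -(nbr G ℓ w 0) + nbr G ℓ w 1 + nbr G ℓ w 2 := hcon
    nlinarith [h0, mul_le_mul_of_nonneg_left h0' (by linarith : (0:ℤ) ≤ 2*((Fintype.card V : ℤ) + 1))]
  have hs1 : nbr G ℓ w 0 - nbr G ℓ w 1 + nbr G ℓ w 2 ≤ 0 := by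
    by_contra hcon
    push_neg at hcon
    have h1' : (1:ℤ) ≤ nbr G ℓ w 0 - nbr G ℓ w 1 + nbr G ℓ w 2 := hcon
    nlinarith [h1, mul_le_mul_of_nonneg_left h1' (by linarith : (0:ℤ) ≤ 2*((Fintype.card V : ℤ) + 1))]
  constructor
  · linarith
  · linarith

lemma nbr_mvA_center0 (G : SimpleGraph V) [DecidableRel G.Adj] (ℓ : V → Fin 3) (v : V) :
    nbr G (mvA (univ.filter (fun x => G.Adj v x ∧ ℓ x = 2)) ℓ) v 0
      = nbr G ℓ v 0 + nbr G ℓ v 2 := by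
  classical
  set T := univ.filter (fun x => G.Adj v x ∧ ℓ x = 2) with hT
  have hsplit : (univ.filter (fun x => G.Adj v x ∧ mvA T ℓ x = 0))
      = (univ.filter (fun x => G.Adj v x ∧ ℓ x = 0)) ∪ T := by
    ext x
    constructor
    · intro hx
      obtain ⟨-, hadj, h0⟩ := Finset.mem_filter.1 hx
      by_cases hxT : x ∈ T
      · exact Finset.mem_union_right _ hxT
      · exact Finset.mem_union_left _ (Finset.mem_filter.2
          ⟨mem_univ x, hadj, by rwa [mvA_apply_not_mem hxT] at h0⟩)
    · intro hx
      rcases Finset.mem_union.1 hx with hx | hxT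
      · obtain ⟨-, hadj, h0⟩ := Finset.mem_filter.1 hx
        have hxT : x ∉ T := by
          intro hxT
          have h2 := (Finset.mem_filter.1 hxT).2.2
          rw [h0] at h2
          exact absurd h2 (by decide)
        exact Finset.mem_filter.2 ⟨mem_univ x, hadj, by rw [mvA_apply_not_mem hxT, h0]⟩
      · obtain ⟨-, hadj, -⟩ := Finset.mem_filter.1 hxT
        exact Finset.mem_filter.2 ⟨mem_univ x, hadj, by simp [mvA, hxT]⟩
  have hdisj : Disjoint (univ.filter (fun x => G.Adj v x ∧ ℓ x = 0)) T := by
    rw [Finset.disjoint_left]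
    intro x hx hxT
    have h0 := (Finset.mem_filter.1 hx).2.2
    have h2 := (Finset.mem_filter.1 hxT).2.2
    rw [h0] at h2
    exact absurd h2 (by decide)
  show ((univ.filter (fun x => G.Adj v x ∧ mvA T ℓ x = 0)).card : ℤ) = _
  rw [hsplit, Finset.card_union_of_disjoint hdisj]
  unfold nbr
  push_cast
  rfl

lemma nbr_mvA_center1 (G : SimpleGraph V) [DecidableRel G.Adj] (ℓ : V → Fin 3) (v : V) :
    nbr G (mvA (univ.filter (fun x => G.Adj v x ∧ ℓ x = 2)) ℓ) v 1 = nbr G ℓ v 1 := by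
  classical
  set T := univ.filter (fun x => G.Adj v x ∧ ℓ x = 2) with hT
  have hfe : (univ.filter (fun x => G.Adj v x ∧ mvA T ℓ x = 1))
      = (univ.filter (fun x => G.Adj v x ∧ ℓ x = 1)) := by
    apply Finset.filter_congr
    intro x _
    by_cases hxT : x ∈ T
    · constructor
      · rintro ⟨hadj, h1⟩
        exact absurd h1 (by simp [mvA, hxT])
      · rintro ⟨hadj, h1⟩
        have h2 := (Finset.mem_filter.1 hxT).2.2
        rw [h1] at h2
        exact absurd h2 (by decide)
    · rw [mvA_apply_not_mem hxT]
  show ((univ.filter (fun x => G.Adj v x ∧ mvA T ℓ x = 1)).card : ℤ) = _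
  rw [hfe]
  rfl

lemma nbr_mvA_center2 (G : SimpleGraph V) [DecidableRel G.Adj] (ℓ : V → Fin 3) (v : V) :
    nbr G (mvA (univ.filter (fun x => G.Adj v x ∧ ℓ x = 2)) ℓ) v 2 = 0 := by
  classical
  set T := univ.filter (fun x => G.Adj v x ∧ ℓ x = 2) with hT
  have hfe : (univ.filter (fun x => G.Adj v x ∧ mvA T ℓ x = 2)) = ∅ := by
    rw [Finset.filter_eq_empty_iff]
    intro x _
    rintro ⟨hadj, h2⟩
    by_cases hxT : x ∈ T
    · rw [show mvA T ℓ x = 0 from by simp [mvA, hxT]] at h2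
      exact absurd h2 (by decide)
    · rw [mvA_apply_not_mem hxT] at h2
      exact hxT (Finset.mem_filter.2 ⟨mem_univ x, hadj, h2⟩)
  show ((univ.filter (fun x => G.Adj v x ∧ mvA T ℓ x = 2)).card : ℤ) = _
  rw [hfe]
  rfl

/-- At a `psi`-maximal labeling, every `A`-vertex has the strict-majority property. -/
lemma aKey (G : SimpleGraph V) [DecidableRel G.Adj] (ℓ : V → Fin 3)
    (hmax : ∀ m, psi G m ≤ psi G ℓ) (v : V) (hv : ℓ v = 0) :
    nbr G ℓ v 0 + max 1 (nbr G ℓ v 2) ≤ nbr G ℓ v 1 := by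
  classical
  have hK : (1:ℤ) ≤ (Fintype.card V : ℤ) + 1 := oneK
  have e20 : wgt 2 0 - wgt 0 0 = 1 := by decide
  have e21 : wgt 2 1 - wgt 0 1 = -1 := by decide
  have e22 : wgt 2 2 - wgt 0 2 = -1 := by decide
  -- single move v → C gives  a - b - c ≤ -1
  have h2 := hmax (Function.update ℓ v 2)
  rw [psi, psi, phi_update, csize_update, hv, Fin.sum_univ_three,
    e20, e21, e22, ite2, ite0] at h2
  have hs1 : nbr G ℓ v 0 - nbr G ℓ v 1 - nbr G ℓ v 2 ≤ -1 := by
    by_contra hcon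
    push_neg at hcon
    have h2' : (0:ℤ) ≤ nbr G ℓ v 0 - nbr G ℓ v 1 - nbr G ℓ v 2 := by linarith
    nlinarith [h2, mul_le_mul_of_nonneg_left h2' (by linarith : (0:ℤ) ≤ 2*((Fintype.card V : ℤ) + 1))]
  -- compound move: all C-neighbors of v to A, then v to C; gives a + c - b ≤ 0
  set T := univ.filter (fun x => G.Adj v x ∧ ℓ x = 2) with hT
  have hTmem : ∀ x ∈ T, ℓ x = 2 := fun x hx => (Finset.mem_filter.1 hx).2.2
  have hTprop : ∀ w ∈ T, ℓ w = 2 ∧ nbr G ℓ w 0 = nbr G ℓ w 1 ∧ nbr G ℓ w 2 = 0 := by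
    intro w hw
    have hw2 := hTmem w hw
    exact ⟨hw2, (cKey G ℓ hmax w hw2).1, (cKey G ℓ hmax w hw2).2⟩
  have hphi' : phi G (mvA T ℓ) = phi G ℓ := phi_mvA G ℓ T hTprop
  have hcs' : csize (mvA T ℓ) = csize ℓ - T.card := csize_mvA T ℓ hTmem
  have hvT : v ∉ T := by
    intro hvT
    have := hTmem v hvT
    rw [hv] at this
    exact absurd this (by decide)
  have hv' : mvA T ℓ v = 0 := by rw [mvA_apply_not_mem hvT, hv]
  have hn0 : nbr G (mvA T ℓ) v 0 = nbr G ℓ v 0 + nbr G ℓ v 2 := nbr_mvA_center0 G ℓ v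
  have hn1 : nbr G (mvA T ℓ) v 1 = nbr G ℓ v 1 := nbr_mvA_center1 G ℓ v
  have hn2 : nbr G (mvA T ℓ) v 2 = 0 := nbr_mvA_center2 G ℓ v
  have hTcard : (T.card : ℤ) = nbr G ℓ v 2 := rfl
  have hcle : nbr G ℓ v 2 ≤ (Fintype.card V : ℤ) := nbr_le_card G ℓ v 2
  have h3 := hmax (Function.update (mvA T ℓ) v 2)
  rw [psi, psi, phi_update, csize_update, hv', hphi', hcs', Fin.sum_univ_three,
    e20, e21, e22, ite2, ite0, hn0, hn1, hn2, hTcard] at h3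
  have hs2 : nbr G ℓ v 0 + nbr G ℓ v 2 - nbr G ℓ v 1 ≤ 0 := by
    by_contra hcon
    push_neg at hcon
    have h3' : (1:ℤ) ≤ nbr G ℓ v 0 + nbr G ℓ v 2 - nbr G ℓ v 1 := hcon
    nlinarith [h3, hcle,
      mul_le_mul_of_nonneg_left h3' (by linarith : (0:ℤ) ≤ 2*((Fintype.card V : ℤ) + 1))]
  have hcnn := nbr_nonneg G ℓ v 2
  rcases le_total (nbr G ℓ v 2) 1 with hc1 | hc1
  · rw [max_eq_left hc1]
    rcases le_or_gt (nbr G ℓ v 2) 0 with hc0 | hc0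
    · linarith
    · linarith
  · rw [max_eq_right hc1]
    linarith


def sw : Fin 3 → Fin 3 := ![1, 0, 2]

lemma sw_wgt : ∀ a b, wgt (sw a) (sw b) = wgt a b := by decide

lemma phi_sw (G : SimpleGraph V) [DecidableRel G.Adj] (ℓ : V → Fin 3) :
    phi G (fun x => sw (ℓ x)) = phi G ℓ := by
  unfold phi
  refine Finset.sum_congr rfl fun u _ => Finset.sum_congr rfl fun x _ => ?_
  by_cases h : G.Adj u x <;> simp [h, sw_wgt]

lemma csize_sw (ℓ : V → Fin 3) : csize (fun x => sw (ℓ x)) = csize ℓ := by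
  unfold csize
  refine Finset.sum_congr rfl fun v _ => ?_
  have h : ∀ t : Fin 3, (sw t = 2) ↔ (t = 2) := by decide
  exact if_congr (h (ℓ v)) rfl rfl

lemma psi_sw (G : SimpleGraph V) [DecidableRel G.Adj] (ℓ : V → Fin 3) :
    psi G (fun x => sw (ℓ x)) = psi G ℓ := by
  unfold psi
  rw [phi_sw, csize_sw]

lemma nbr_sw (G : SimpleGraph V) [DecidableRel G.Adj] (ℓ : V → Fin 3) (v : V) (t : Fin 3) :
    nbr G (fun x => sw (ℓ x)) v t = nbr G ℓ v (sw t) := by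
  have hiff : ∀ s u : Fin 3, (sw s = u) ↔ (s = sw u) := by decide
  have hfe : (univ.filter (fun x => G.Adj v x ∧ sw (ℓ x) = t))
      = (univ.filter (fun x => G.Adj v x ∧ ℓ x = sw t)) :=
    Finset.filter_congr (fun x _ => and_congr_right fun _ => hiff (ℓ x) t)
  show ((univ.filter (fun x => G.Adj v x ∧ sw (ℓ x) = t)).card : ℤ) = _
  rw [hfe]
  rfl

/-- At a `psi`-maximal labeling, every `B`-vertex has the strict-majority property. -/
lemma bKey (G : SimpleGraph V) [DecidableRel G.Adj] (ℓ : V → Fin 3)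
    (hmax : ∀ m, psi G m ≤ psi G ℓ) (v : V) (hv : ℓ v = 1) :
    nbr G ℓ v 1 + max 1 (nbr G ℓ v 2) ≤ nbr G ℓ v 0 := by
  have hmax' : ∀ m, psi G m ≤ psi G (fun x => sw (ℓ x)) := by
    intro m
    rw [psi_sw]
    exact hmax m
  have hv' : (fun x => sw (ℓ x)) v = 0 := by
    show sw (ℓ v) = 0
    rw [hv]
    decide
  have key := aKey G (fun x => sw (ℓ x)) hmax' v hv'
  rw [nbr_sw, nbr_sw, nbr_sw] at key
  have s0 : sw 0 = 1 := by decide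
  have s1 : sw 1 = 0 := by decide
  have s2 : sw 2 = 2 := by decide
  rw [s0, s1, s2] at key
  exact key

lemma degIn_eq (G : SimpleGraph V) [DecidableRel G.Adj] (ℓ : V → Fin 3) (a : V) (t : Fin 3) :
    ((degIn G a (univ.filter (fun x => ℓ x = t)) : ℕ) : ℤ) = nbr G ℓ a t := by
  have h : (univ.filter (fun x => ℓ x = t)).filter (G.Adj a)
      = univ.filter (fun x => G.Adj a x ∧ ℓ x = t) := by
    rw [Finset.filter_filter]
    apply Finset.filter_congr
    intro x _
    exact and_comm
  unfold degIn nbr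
  rw [h]

end DecompAux

theorem decomposition_exists (G : SimpleGraph V) [DecidableRel G.Adj]
    (hconn : G.Connected) :
    ∃ A B C : Finset V,
      A ∪ B ∪ C = Finset.univ ∧
      Disjoint A B ∧ Disjoint A C ∧ Disjoint B C ∧
      (∀ a ∈ A, degIn G a A + max 1 (degIn G a C) ≤ degIn G a B) ∧
      (∀ b ∈ B, degIn G b B + max 1 (degIn G b C) ≤ degIn G b A) ∧
      (∀ c ∈ C, ∀ c' ∈ C, ¬ G.Adj c c') ∧
      (∀ c ∈ C, degIn G c A = degIn G c B) := by
  classical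
  obtain ⟨ℓ, -, hmaxmem⟩ := Finset.exists_max_image (univ : Finset (V → Fin 3))
    (DecompAux.psi G) ⟨fun _ => 0, mem_univ _⟩
  have hmax : ∀ m, DecompAux.psi G m ≤ DecompAux.psi G ℓ := fun m => hmaxmem m (mem_univ m)
  have htri : ∀ t : Fin 3, t = 0 ∨ t = 1 ∨ t = 2 := by decide
  refine ⟨univ.filter (fun x => ℓ x = 0), univ.filter (fun x => ℓ x = 1),
    univ.filter (fun x => ℓ x = 2), ?_, ?_, ?_, ?_, ?_, ?_, ?_, ?_⟩
  · ext x
    simp only [Finset.mem_union, Finset.mem_filter, mem_univ, true_and, iff_true]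
    rcases htri (ℓ x) with h | h | h
    · exact Or.inl (Or.inl h)
    · exact Or.inl (Or.inr h)
    · exact Or.inr h
  · rw [Finset.disjoint_left]
    intro x hx hy
    have h0 := (Finset.mem_filter.1 hx).2
    have h1 := (Finset.mem_filter.1 hy).2
    rw [h0] at h1
    exact absurd h1 (by decide)
  · rw [Finset.disjoint_left]
    intro x hx hy
    have h0 := (Finset.mem_filter.1 hx).2
    have h1 := (Finset.mem_filter.1 hy).2
    rw [h0] at h1
    exact absurd h1 (by decide)
  · rw [Finset.disjoint_left]
    intro x hx hy
    have h0 := (Finset.mem_filter.1 hx).2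
    have h1 := (Finset.mem_filter.1 hy).2
    rw [h0] at h1
    exact absurd h1 (by decide)
  · intro a ha
    have h0 : ℓ a = 0 := (Finset.mem_filter.1 ha).2
    have key := DecompAux.aKey G ℓ hmax a h0
    rw [← DecompAux.degIn_eq G ℓ a 0, ← DecompAux.degIn_eq G ℓ a 1,
      ← DecompAux.degIn_eq G ℓ a 2] at key
    exact_mod_cast key
  · intro b hb
    have h1 : ℓ b = 1 := (Finset.mem_filter.1 hb).2
    have key := DecompAux.bKey G ℓ hmax b h1
    rw [← DecompAux.degIn_eq G ℓ b 0, ← DecompAux.degIn_eq G ℓ b 1,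
      ← DecompAux.degIn_eq G ℓ b 2] at key
    exact_mod_cast key
  · intro c hc c' hc' hadj
    have h2 : ℓ c = 2 := (Finset.mem_filter.1 hc).2
    have h2' : ℓ c' = 2 := (Finset.mem_filter.1 hc').2
    exact DecompAux.no_c_neighbor (DecompAux.cKey G ℓ hmax c h2).2 c' hadj h2'
  · intro c hc
    have h2 : ℓ c = 2 := (Finset.mem_filter.1 hc).2
    have key := (DecompAux.cKey G ℓ hmax c h2).1
    rw [← DecompAux.degIn_eq G ℓ c 0, ← DecompAux.degIn_eq G ℓ c 1] at key
    exact_mod_cast key
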